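/- Let G : ℝ^d → ℝ^n be differentiable with derivative DG, let A : ℝ^n → ℝ^m be a linear map, let z* ∈ ℝ^d, and define F(z) = ‖A G(z*) − A G(z)‖². Suppose: (i) G is (α, γ)-strongly smooth, i.e. ⟨G(z) − G(z'), DG(z)(z − z')⟩ ≥ α‖z − z'‖² − γ for all z, z'; (ii) ‖G(z) − G(z')‖ ≤ κ‖z − z'‖ for all z, z' and ‖DG(z)‖ ≤ κ for all z; and (iii) ‖I − AᵀA‖ ≤ δ in operator norm, where I is the identity on ℝ^n. Then for every z ∈ ℝ^d, ⟨z − z*, ∇F(z)⟩ ≥ 2(α − δκ²)‖z − z*‖² − 2γ; i.e., F is (2(α − δκ²), 2γ)-dissipative around z*. -/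

import Mathlib

set_option maxHeartbeats 1000000


open scoped RealInnerProductSpace

/-- Dissipativity of the compressed-sensing loss: if `G` is `(α, γ)`-strongly smooth,
`κ`-Lipschitz with `‖DG‖ ≤ κ`, and `‖I − AᵀA‖ ≤ δ`, then
`F(z) = ‖A G(z*) − A G(z)‖²` is `(2(α − δκ²), 2γ)`-dissipative around `z*`. -/
theorem cs_loss_dissipative
    {d n m : ℕ}
    (G : EuclideanSpace ℝ (Fin d) → EuclideanSpace ℝ (Fin n))
    (DG : EuclideanSpace ℝ (Fin d) →
      (EuclideanSpace ℝ (Fin d) →L[ℝ] EuclideanSpace ℝ (Fin n)))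
    (hdiff : ∀ z, HasFDerivAt G (DG z) z)
    (A : EuclideanSpace ℝ (Fin n) →L[ℝ] EuclideanSpace ℝ (Fin m))
    (zstar : EuclideanSpace ℝ (Fin d))
    (α γ κ δ : ℝ)
    (hsmooth : ∀ z z' : EuclideanSpace ℝ (Fin d),
      ⟪G z - G z', DG z (z - z')⟫ ≥ α * ‖z - z'‖ ^ 2 - γ)
    (hlipG : ∀ z z' : EuclideanSpace ℝ (Fin d), ‖G z - G z'‖ ≤ κ * ‖z - z'‖)
    (hDG : ∀ z : EuclideanSpace ℝ (Fin d), ‖DG z‖ ≤ κ)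
    (hA : ‖ContinuousLinearMap.id ℝ (EuclideanSpace ℝ (Fin n)) -
      (ContinuousLinearMap.adjoint A).comp A‖ ≤ δ)
    (F : EuclideanSpace ℝ (Fin d) → ℝ)
    (hF : ∀ w, F w = ‖A (G zstar) - A (G w)‖ ^ 2) :
    ∀ z : EuclideanSpace ℝ (Fin d),
      ⟪z - zstar, gradient F z⟫ ≥
        2 * (α - δ * κ ^ 2) * ‖z - zstar‖ ^ 2 - 2 * γ := by
  intro z
  set u := z - zstar with hu
  set B : EuclideanSpace ℝ (Fin d) →L[ℝ] EuclideanSpace ℝ (Fin m) := A.comp (DG z) with hB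
  set h : EuclideanSpace ℝ (Fin d) → EuclideanSpace ℝ (Fin m) :=
    fun w => A (G zstar) - A (G w) with hh
  -- derivative of h
  have hDh : HasFDerivAt h (-B) z := by
    have h1 : HasFDerivAt (fun w => A (G w)) B z := A.hasFDerivAt.comp z (hdiff z)
    simpa [hh, Pi.sub_def] using (hasFDerivAt_const (A (G zstar)) z).sub h1
  -- gradient of F
  have hFinner : F = fun w => ⟪h w, h w⟫ := by
    funext w; rw [hF w, real_inner_self_eq_norm_sq]
  set g : EuclideanSpace ℝ (Fin d) :=
    (2 : ℝ) • (ContinuousLinearMap.adjoint B) (A (G z) - A (G zstar)) with hg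
  have hgrad : HasGradientAt F g z := by
    rw [hasGradientAt_iff_hasFDerivAt]
    have := hDh.inner (𝕜 := ℝ) hDh
    rw [← hFinner] at this
    refine this.congr_fderiv (Eq.symm ?_)
    apply ContinuousLinearMap.ext
    intro v
    simp only [InnerProductSpace.toDual_apply_apply, ContinuousLinearMap.coe_comp',
      Function.comp_apply, ContinuousLinearMap.prod_apply, fderivInnerCLM_apply,
      ContinuousLinearMap.neg_apply]
    rw [hg, real_inner_smul_left, ContinuousLinearMap.adjoint_inner_left]
    rw [real_inner_comm (h z) (-(B v)), hh]
    simp [inner_neg_left, inner_sub_left, inner_sub_right]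
    ring
  rw [hgrad.gradient, hg]
  -- now the inequality
  have hκ : 0 ≤ κ := le_trans (norm_nonneg _) (hDG z)
  have hδ : 0 ≤ δ := le_trans (norm_nonneg _) hA
  set T := ContinuousLinearMap.id ℝ (EuclideanSpace ℝ (Fin n)) -
      (ContinuousLinearMap.adjoint A).comp A with hT
  set x := DG z u with hx
  set y := G z - G zstar with hy
  have key : ⟪u, g⟫ = 2 * (⟪x, y⟫ - ⟪x, T y⟫) := by
    rw [hg, real_inner_smul_right, ContinuousLinearMap.adjoint_inner_right]
    have : A (G z) - A (G zstar) = A y := by rw [hy, map_sub]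
    rw [this, hB]
    have : (A.comp (DG z)) u = A x := rfl
    rw [this, ← ContinuousLinearMap.adjoint_inner_right A, hT]
    simp [inner_sub_right]
  rw [key]
  have h1 : ⟪x, y⟫ ≥ α * ‖u‖ ^ 2 - γ := by
    rw [real_inner_comm]; exact hsmooth z zstar
  have h2 : ⟪x, T y⟫ ≤ δ * κ ^ 2 * ‖u‖ ^ 2 := by
    calc ⟪x, T y⟫ ≤ ‖x‖ * ‖T y‖ := real_inner_le_norm x (T y)
      _ ≤ (κ * ‖u‖) * (δ * (κ * ‖u‖)) := by
          apply mul_le_mul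
          · calc ‖x‖ ≤ ‖DG z‖ * ‖u‖ := (DG z).le_opNorm u
              _ ≤ κ * ‖u‖ := by
                  apply mul_le_mul_of_nonneg_right (hDG z) (norm_nonneg u)
          · calc ‖T y‖ ≤ ‖T‖ * ‖y‖ := T.le_opNorm y
              _ ≤ δ * (κ * ‖u‖) := by
                  apply mul_le_mul hA (hlipG z zstar) (norm_nonneg y) hδ
          · exact norm_nonneg _
          · positivity
      _ = δ * κ ^ 2 * ‖u‖ ^ 2 := by ring
  nlinarith [h1, h2]
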